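/- Let u_- ≥ 0 ≥ u_+, u_- > u_+, v_± > 0, and let σ = u_- + u_+ and H(x) = v_- for x < 0, v_+ for x > 0. Suppose v^ε : ℝ → ℝ is given by v^ε(ξ) = v_- for ξ < σ₁(ε), v^ε(ξ) = v_*(ε) for σ₁(ε) < ξ < σ₂(ε), v^ε(ξ) = v_+ for ξ > σ₂(ε), where σ₁(ε), σ₂(ε) → σ as ε → 0⁺, σ₁(ε) < σ₂(ε), and (σ₂(ε) - σ₁(ε))·v_*(ε) → u_- v_+ - u_+ v_-. Then for every continuous compactly supported test function φ : ℝ → ℝ, ∫ (v^ε(ξ) - H(ξ - σ)) φ(ξ) dξ → (u_- v_+ - u_+ v_-) φ(σ) as ε → 0⁺; i.e., v^ε converges in the sense of distributions to H(· - σ) + (u_- v_+ - u_+ v_-) δ_σ. -/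

import Mathlib

open MeasureTheory Filter

theorem density_converges_to_delta (um up vm vp : ℝ)
    (h1 : um ≥ 0) (h2 : 0 ≥ up) (h3 : um > up) (hvm : 0 < vm) (hvp : 0 < vp)
    (σ₁ σ₂ vstar : ℝ → ℝ) (vε : ℝ → ℝ → ℝ)
    (hσ1 : Tendsto σ₁ (nhdsWithin 0 (Set.Ioi 0)) (nhds (um + up)))
    (hσ2 : Tendsto σ₂ (nhdsWithin 0 (Set.Ioi 0)) (nhds (um + up)))
    (horder : ∀ e : ℝ, 0 < e → σ₁ e < σ₂ e)
    (hw : Tendsto (fun e => (σ₂ e - σ₁ e) * vstar e)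
      (nhdsWithin 0 (Set.Ioi 0)) (nhds (um * vp - up * vm)))
    (hpiece : ∀ e : ℝ, 0 < e → ∀ ξ : ℝ,
      (ξ < σ₁ e → vε e ξ = vm) ∧
      (σ₁ e < ξ ∧ ξ < σ₂ e → vε e ξ = vstar e) ∧
      (σ₂ e < ξ → vε e ξ = vp)) :
    ∀ φ : ℝ → ℝ, Continuous φ → HasCompactSupport φ →
      Tendsto (fun e => ∫ ξ : ℝ,
          (vε e ξ - (if ξ - (um + up) < 0 then vm else vp)) * φ ξ)
        (nhdsWithin 0 (Set.Ioi 0))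
        (nhds ((um * vp - up * vm) * φ (um + up))) := by
  intro φ hφc hφs
  set s : ℝ := um + up with hsdef
  set L : ℝ := um * vp - up * vm with hLdef
  have hφint : Integrable φ := hφc.integrable_of_hasCompactSupport hφs
  obtain ⟨M, hM⟩ : ∃ M, ∀ x : ℝ, ‖φ x‖ ≤ M := hφs.exists_bound_of_continuous hφc
  have hM0 : 0 ≤ M := le_trans (norm_nonneg _) (hM 0)
  -- Key integral identity for each e > 0
  have key : ∀ e : ℝ, 0 < e →
      (∫ ξ : ℝ, (vε e ξ - (if ξ - s < 0 then vm else vp)) * φ ξ)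
      = vstar e * (∫ ξ in (σ₁ e)..(σ₂ e), φ ξ)
        + vm * (∫ ξ in s..(σ₁ e), φ ξ)
        + vp * (∫ ξ in (σ₂ e)..s, φ ξ) := by
    intro e he
    set a : ℝ := σ₁ e with hadef
    set b : ℝ := σ₂ e with hbdef
    set w : ℝ := vstar e with hwdef
    have hab : a < b := horder e he
    set f1 : ℝ → ℝ := (Set.Ico a b).indicator (fun ξ => w * φ ξ) with hf1
    set f2 : ℝ → ℝ := (Set.Iio a).indicator (fun ξ => vm * φ ξ) with hf2
    set f3 : ℝ → ℝ := (Set.Iio s).indicator (fun ξ => vm * φ ξ) with hf3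
    set f4 : ℝ → ℝ := (Set.Ici b).indicator (fun ξ => vp * φ ξ) with hf4
    set f5 : ℝ → ℝ := (Set.Ici s).indicator (fun ξ => vp * φ ξ) with hf5
    have hi1 : Integrable f1 := (hφint.const_mul w).indicator measurableSet_Ico
    have hi2 : Integrable f2 := (hφint.const_mul vm).indicator measurableSet_Iio
    have hi3 : Integrable f3 := (hφint.const_mul vm).indicator measurableSet_Iio
    have hi4 : Integrable f4 := (hφint.const_mul vp).indicator measurableSet_Ici
    have hi5 : Integrable f5 := (hφint.const_mul vp).indicator measurableSet_Ici
    have hae : (fun ξ : ℝ => (vε e ξ - (if ξ - s < 0 then vm else vp)) * φ ξ)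
        =ᵐ[volume] fun ξ => f1 ξ + f2 ξ - f3 ξ + f4 ξ - f5 ξ := by
      have h0 : ∀ᵐ ξ : ℝ, ξ ∉ ({a, b} : Set ℝ) :=
        measure_eq_zero_iff_ae_notMem.mp
          (((Set.finite_singleton b).insert a).measure_zero volume)
      filter_upwards [h0] with ξ hξ
      simp only [Set.mem_insert_iff, Set.mem_singleton_iff, not_or] at hξ
      obtain ⟨hξa, hξb⟩ := hξ
      have hp := hpiece e he ξ
      rcases lt_trichotomy ξ a with hlt | heq | hgt
      · rw [hp.1 hlt, hf1, hf2, hf3, hf4, hf5,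
          Set.indicator_of_notMem
            (fun h => absurd h.1 (not_le.mpr hlt) : ξ ∉ Set.Ico a b),
          Set.indicator_of_mem (Set.mem_Iio.mpr hlt),
          Set.indicator_of_notMem
            (fun h => absurd (Set.mem_Ici.mp h) (not_le.mpr (hlt.trans hab))
              : ξ ∉ Set.Ici b)]
        by_cases hxs : ξ < s
        · rw [if_pos (sub_neg.mpr hxs), Set.indicator_of_mem (Set.mem_Iio.mpr hxs),
            Set.indicator_of_notMem
              (fun h => absurd (Set.mem_Ici.mp h) (not_le.mpr hxs) : ξ ∉ Set.Ici s)]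
          ring
        · rw [if_neg (fun h => hxs (sub_neg.mp h)),
            Set.indicator_of_notMem (fun h => hxs (Set.mem_Iio.mp h) : ξ ∉ Set.Iio s),
            Set.indicator_of_mem (Set.mem_Ici.mpr (not_lt.mp hxs))]
          ring
      · exact absurd heq hξa
      · rcases lt_trichotomy ξ b with hltb | heqb | hgtb
        · rw [hp.2.1 ⟨hgt, hltb⟩, hf1, hf2, hf3, hf4, hf5,
            Set.indicator_of_mem (Set.mem_Ico.mpr ⟨hgt.le, hltb⟩),
            Set.indicator_of_notMem
              (fun h => absurd (Set.mem_Iio.mp h) (not_lt.mpr hgt.le) : ξ ∉ Set.Iio a),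
            Set.indicator_of_notMem
              (fun h => absurd (Set.mem_Ici.mp h) (not_le.mpr hltb) : ξ ∉ Set.Ici b)]
          by_cases hxs : ξ < s
          · rw [if_pos (sub_neg.mpr hxs), Set.indicator_of_mem (Set.mem_Iio.mpr hxs),
              Set.indicator_of_notMem
                (fun h => absurd (Set.mem_Ici.mp h) (not_le.mpr hxs) : ξ ∉ Set.Ici s)]
            ring
          · rw [if_neg (fun h => hxs (sub_neg.mp h)),
              Set.indicator_of_notMem (fun h => hxs (Set.mem_Iio.mp h) : ξ ∉ Set.Iio s),
              Set.indicator_of_mem (Set.mem_Ici.mpr (not_lt.mp hxs))]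
            ring
        · exact absurd heqb hξb
        · rw [hp.2.2 hgtb, hf1, hf2, hf3, hf4, hf5,
            Set.indicator_of_notMem
              (fun h => absurd h.2 (not_lt.mpr hgtb.le) : ξ ∉ Set.Ico a b),
            Set.indicator_of_notMem
              (fun h => absurd (Set.mem_Iio.mp h)
                (not_lt.mpr ((hab.trans hgtb).le)) : ξ ∉ Set.Iio a),
            Set.indicator_of_mem (Set.mem_Ici.mpr hgtb.le)]
          by_cases hxs : ξ < s
          · rw [if_pos (sub_neg.mpr hxs), Set.indicator_of_mem (Set.mem_Iio.mpr hxs),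
              Set.indicator_of_notMem
                (fun h => absurd (Set.mem_Ici.mp h) (not_le.mpr hxs) : ξ ∉ Set.Ici s)]
            ring
          · rw [if_neg (fun h => hxs (sub_neg.mp h)),
              Set.indicator_of_notMem (fun h => hxs (Set.mem_Iio.mp h) : ξ ∉ Set.Iio s),
              Set.indicator_of_mem (Set.mem_Ici.mpr (not_lt.mp hxs))]
            ring
    rw [integral_congr_ae hae]
    have hsplit : (∫ ξ : ℝ, (f1 ξ + f2 ξ - f3 ξ + f4 ξ - f5 ξ))
        = (∫ ξ : ℝ, f1 ξ) + (∫ ξ : ℝ, f2 ξ) - (∫ ξ : ℝ, f3 ξ)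
          + (∫ ξ : ℝ, f4 ξ) - (∫ ξ : ℝ, f5 ξ) := by
      have i12 : Integrable (fun ξ => f1 ξ + f2 ξ) := hi1.add hi2
      have i123 : Integrable (fun ξ => f1 ξ + f2 ξ - f3 ξ) := i12.sub hi3
      have i1234 : Integrable (fun ξ => f1 ξ + f2 ξ - f3 ξ + f4 ξ) := i123.add hi4
      rw [integral_sub i1234 hi5, integral_add i123 hi4,
        integral_sub i12 hi3, integral_add hi1 hi2]
    rw [hsplit]
    have e1 : (∫ ξ : ℝ, f1 ξ) = w * (∫ ξ in a..b, φ ξ) := by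
      rw [hf1, integral_indicator measurableSet_Ico, integral_Ico_eq_integral_Ioo,
        intervalIntegral.integral_of_le hab.le, integral_Ioc_eq_integral_Ioo,
        integral_const_mul]
    have e23 : (∫ ξ : ℝ, f2 ξ) - (∫ ξ : ℝ, f3 ξ) = vm * (∫ ξ in s..a, φ ξ) := by
      rw [hf2, hf3, integral_indicator measurableSet_Iio,
        integral_indicator measurableSet_Iio,
        ← integral_Iic_eq_integral_Iio, ← integral_Iic_eq_integral_Iio,
        intervalIntegral.integral_Iic_sub_Iic ((hφint.const_mul vm).integrableOn)
          ((hφint.const_mul vm).integrableOn),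
        intervalIntegral.integral_const_mul]
    have e45 : (∫ ξ : ℝ, f4 ξ) - (∫ ξ : ℝ, f5 ξ) = vp * (∫ ξ in b..s, φ ξ) := by
      have hc : ∀ c : ℝ, (∫ ξ in Set.Ici c, vp * φ ξ)
          = (∫ ξ : ℝ, vp * φ ξ) - ∫ ξ in Set.Iio c, vp * φ ξ := by
        intro c
        have := integral_add_compl (measurableSet_Iio (a := c)) (hφint.const_mul vp)
        rw [Set.compl_Iio] at this
        linarith
      rw [hf4, hf5, integral_indicator measurableSet_Ici,
        integral_indicator measurableSet_Ici, hc b, hc s]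
      have h2 : (∫ ξ in Set.Iio s, vp * φ ξ) - ∫ ξ in Set.Iio b, vp * φ ξ
          = ∫ ξ in b..s, vp * φ ξ := by
        rw [← integral_Iic_eq_integral_Iio, ← integral_Iic_eq_integral_Iio]
        exact intervalIntegral.integral_Iic_sub_Iic ((hφint.const_mul vp).integrableOn)
          ((hφint.const_mul vp).integrableOn)
      rw [show (∫ ξ : ℝ, vp * φ ξ) - (∫ ξ in Set.Iio b, vp * φ ξ)
          - ((∫ ξ : ℝ, vp * φ ξ) - ∫ ξ in Set.Iio s, vp * φ ξ)
          = (∫ ξ in Set.Iio s, vp * φ ξ) - ∫ ξ in Set.Iio b, vp * φ ξ by ring, h2,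
        intervalIntegral.integral_const_mul]
    rw [show (∫ ξ : ℝ, f1 ξ) + (∫ ξ : ℝ, f2 ξ) - (∫ ξ : ℝ, f3 ξ)
        + (∫ ξ : ℝ, f4 ξ) - (∫ ξ : ℝ, f5 ξ)
        = (∫ ξ : ℝ, f1 ξ) + ((∫ ξ : ℝ, f2 ξ) - (∫ ξ : ℝ, f3 ξ))
          + ((∫ ξ : ℝ, f4 ξ) - (∫ ξ : ℝ, f5 ξ)) by ring, e1, e23, e45]
  -- Now the convergence
  have hiiφ : ∀ x y : ℝ, IntervalIntegrable φ volume x y := fun x y =>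
    hφint.intervalIntegrable
  have hdecomp : ∀ e : ℝ, 0 < e →
      vstar e * (∫ ξ in (σ₁ e)..(σ₂ e), φ ξ)
      = (σ₂ e - σ₁ e) * vstar e * φ s
        + vstar e * (∫ ξ in (σ₁ e)..(σ₂ e), (φ ξ - φ s)) := by
    intro e he
    rw [intervalIntegral.integral_sub (hiiφ _ _) intervalIntegrable_const,
      intervalIntegral.integral_const]
    simp only [smul_eq_mul]
    ring
  have hA : Tendsto (fun e => (σ₂ e - σ₁ e) * vstar e * φ s)
      (nhdsWithin 0 (Set.Ioi 0)) (nhds (L * φ s)) := hw.mul_const (φ s)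
  have hB : Tendsto (fun e => vstar e * (∫ ξ in (σ₁ e)..(σ₂ e), (φ ξ - φ s)))
      (nhdsWithin 0 (Set.Ioi 0)) (nhds 0) := by
    rw [NormedAddCommGroup.tendsto_nhds_zero]
    intro ε hε
    set K : ℝ := |L| + 1 with hKdef
    have hKpos : 0 < K := by positivity
    have hK : ∀ᶠ e in nhdsWithin 0 (Set.Ioi 0), |(σ₂ e - σ₁ e) * vstar e| ≤ K := by
      filter_upwards [Metric.tendsto_nhds.mp hw 1 one_pos] with e hd
      rw [Real.dist_eq] at hd
      have := abs_sub_abs_le_abs_sub ((σ₂ e - σ₁ e) * vstar e) L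
      rw [hKdef]; linarith
    have hε' : 0 < ε / (2 * K) := by positivity
    obtain ⟨δ, hδ, hδφ⟩ := Metric.uniformContinuous_iff.mp
      (hφs.uniformContinuous_of_continuous hφc) (ε / (2 * K)) hε'
    have hev1 : ∀ᶠ e in nhdsWithin 0 (Set.Ioi 0), |σ₁ e - s| < δ := by
      filter_upwards [Metric.tendsto_nhds.mp hσ1 δ hδ] with e hd
      rwa [Real.dist_eq] at hd
    have hev2 : ∀ᶠ e in nhdsWithin 0 (Set.Ioi 0), |σ₂ e - s| < δ := by
      filter_upwards [Metric.tendsto_nhds.mp hσ2 δ hδ] with e hd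
      rwa [Real.dist_eq] at hd
    filter_upwards [hK, hev1, hev2, self_mem_nhdsWithin] with e hKe h1e h2e hepos
    have hab : σ₁ e < σ₂ e := horder e hepos
    have hbound : ∀ x ∈ Set.uIoc (σ₁ e) (σ₂ e), ‖φ x - φ s‖ ≤ ε / (2 * K) := by
      intro x hx
      rw [Set.uIoc_of_le hab.le, Set.mem_Ioc] at hx
      have hxs : dist x s < δ := by
        rw [Real.dist_eq, abs_lt]
        rw [abs_lt] at h1e h2e
        constructor <;> nlinarith [hx.1, hx.2]
      have := hδφ hxs
      rw [Real.dist_eq] at this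
      exact le_of_lt this
    have hI := intervalIntegral.norm_integral_le_of_norm_le_const hbound
    calc ‖vstar e * (∫ ξ in (σ₁ e)..(σ₂ e), (φ ξ - φ s))‖
        = |vstar e| * ‖∫ ξ in (σ₁ e)..(σ₂ e), (φ ξ - φ s)‖ := by
          rw [norm_mul]; rfl
      _ ≤ |vstar e| * (ε / (2 * K) * |σ₂ e - σ₁ e|) :=
          mul_le_mul_of_nonneg_left hI (abs_nonneg _)
      _ = ε / (2 * K) * |(σ₂ e - σ₁ e) * vstar e| := by
          rw [abs_mul]; ring
      _ ≤ ε / (2 * K) * K :=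
          mul_le_mul_of_nonneg_left hKe (le_of_lt hε')
      _ = ε / 2 := by
          field_simp
      _ < ε := by linarith
  have hC : Tendsto (fun e => vm * (∫ ξ in s..(σ₁ e), φ ξ))
      (nhdsWithin 0 (Set.Ioi 0)) (nhds 0) := by
    apply squeeze_zero_norm (a := fun e => |vm| * (M * |σ₁ e - s|))
    · intro e
      rw [norm_mul]
      refine mul_le_mul_of_nonneg_left ?_ (abs_nonneg _)
      exact intervalIntegral.norm_integral_le_of_norm_le_const (fun x _ => hM x)
    · have h0 : Tendsto (fun e => σ₁ e - s) (nhdsWithin 0 (Set.Ioi 0)) (nhds 0) := by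
        simpa using hσ1.sub_const s
      have habs : Tendsto (fun e => |σ₁ e - s|) (nhdsWithin 0 (Set.Ioi 0)) (nhds 0) := by
        simpa [Function.comp_def] using (continuous_abs.tendsto 0).comp h0
      simpa using ((habs.const_mul M).const_mul |vm|)
  have hD : Tendsto (fun e => vp * (∫ ξ in (σ₂ e)..s, φ ξ))
      (nhdsWithin 0 (Set.Ioi 0)) (nhds 0) := by
    apply squeeze_zero_norm (a := fun e => |vp| * (M * |s - σ₂ e|))
    · intro e
      rw [norm_mul]
      refine mul_le_mul_of_nonneg_left ?_ (abs_nonneg _)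
      exact intervalIntegral.norm_integral_le_of_norm_le_const (fun x _ => hM x)
    · have h0 : Tendsto (fun e => s - σ₂ e) (nhdsWithin 0 (Set.Ioi 0)) (nhds 0) := by
        simpa using (tendsto_const_nhds (x := s)).sub hσ2
      have habs : Tendsto (fun e => |s - σ₂ e|) (nhdsWithin 0 (Set.Ioi 0)) (nhds 0) := by
        simpa [Function.comp_def] using (continuous_abs.tendsto 0).comp h0
      simpa using ((habs.const_mul M).const_mul |vp|)
  have htot : Tendsto (fun e =>
      (σ₂ e - σ₁ e) * vstar e * φ s
      + vstar e * (∫ ξ in (σ₁ e)..(σ₂ e), (φ ξ - φ s))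
      + vm * (∫ ξ in s..(σ₁ e), φ ξ) + vp * (∫ ξ in (σ₂ e)..s, φ ξ))
      (nhdsWithin 0 (Set.Ioi 0)) (nhds (L * φ s)) := by
    have := ((hA.add hB).add hC).add hD
    simpa using this
  refine htot.congr' ?_
  filter_upwards [self_mem_nhdsWithin] with e he
  rw [← hdecomp e he]
  have := key e he
  linarith
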